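/- Let S : ω^ω → 2^ω be a function for which there exists a family ⟨P_s : s ∈ ω^{<ω}⟩ of perfect subsets of 2^ω such that for all s ∈ ω^{<ω} and n, m ∈ ℕ: P_{s⌢n} ⊆ P_s; if n ≠ m then P_{s⌢n} ∩ P_{s⌢m} = ∅; diam(P_s) ≤ 2^{-|s|}; and S(x) is the unique element of ⋂_{n∈ℕ} P_{x↾n} for every x ∈ ω^ω. Then there exists a perfect set Q ⊆ 2^ω such that m′(S^{-1}[⋃{P_s : s ∈ ω^{<ω} and μ_Q(P_s) = 0}]) < 1. -/

import Mathlib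

open MeasureTheory Set Pointwise

/-- The Cantor space `2^ω`, a compact topological group under coordinatewise
addition mod 2. -/
abbrev CS := ℕ → ZMod 2

/-- The basic clopen set `[w]` determined by a finite binary sequence `w`:
all `x ∈ 2^ω` extending `w`. -/
def cyl (w : List (ZMod 2)) : Set CS := {x | ∀ i, i < w.length → x i = w.getD i 0}

/-- `w` is a branching node of `P`: both `[w⌢0] ∩ P` and `[w⌢1] ∩ P` are nonempty. -/
def Branch (P : Set CS) (w : List (ZMod 2)) : Prop :=
  (cyl (w ++ [0]) ∩ P).Nonempty ∧ (cyl (w ++ [1]) ∩ P).Nonempty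

/-- A perfect subset of Cantor space: nonempty, closed, with no isolated points. -/
def PerfSet (P : Set CS) : Prop := Perfect P ∧ P.Nonempty

/-- `ν` is a canonical measure of the perfect set `P`: a Borel probability measure with
`ν P = 1` and `ν [w⌢0] = ν [w⌢1]` for every branching node `w` of `P`. -/
def IsCanonical (P : Set CS) (ν : Measure CS) : Prop :=
  IsProbabilityMeasure ν ∧ ν P = 1 ∧
    ∀ w : List (ZMod 2), Branch P w → ν (cyl (w ++ [0])) = ν (cyl (w ++ [1]))

/-- `A` is `P`-null: the `μ_P`-outer measure of `A ∩ P` is `0`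
(quantified over all canonical measures of `P`). -/
def PNull (P A : Set CS) : Prop := ∀ ν : Measure CS, IsCanonical P ν → ν (A ∩ P) = 0

/-- `A` is `P`-measurable: `A ∩ P` differs from a Borel set by a `P`-null set,
i.e. it is null-measurable with respect to the canonical measure of `P`. -/
def PMeasurable (P A : Set CS) : Prop :=
  ∀ ν : Measure CS, IsCanonical P ν → NullMeasurableSet (A ∩ P) ν

/-- `X` is perfectly null: `P`-null for every perfect set `P`. -/
def PerfectlyNull (X : Set CS) : Prop := ∀ P, PerfSet P → PNull P X

/-- `μ` is the fair-coin (Lebesgue product) measure on `2^ω`: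
a Borel probability measure with `μ [w] = 2^{-|w|}` for every finite binary sequence. -/
def IsFairCoin (μ : Measure CS) : Prop :=
  IsProbabilityMeasure μ ∧ ∀ w : List (ZMod 2), μ (cyl w) = (2 : ENNReal)⁻¹ ^ w.length

/-- The number of branching nodes of `P` that are proper initial segments of `v`. -/
noncomputable def brCount (P : Set CS) (v : List (ZMod 2)) : ℕ :=
  Set.ncard {u : List (ZMod 2) | u <+: v ∧ u ≠ v ∧ Branch P u}

/-- A balanced perfect set: branching nodes of strictly smaller level
are strictly shorter. -/
def BalancedPerf (P : Set CS) : Prop :=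
  PerfSet P ∧ ∀ v w : List (ZMod 2), Branch P v → Branch P w →
    brCount P v < brCount P w → v.length < w.length

/-- A uniformly perfect set: on each length, either all nodes meeting `P` branch,
or none does. -/
def UniformlyPerf (P : Set CS) : Prop :=
  PerfSet P ∧ ∀ n : ℕ,
    (∀ w : List (ZMod 2), w.length = n → (cyl w ∩ P).Nonempty → Branch P w) ∨
    (∀ w : List (ZMod 2), w.length = n → ¬ Branch P w)

/-- A Silver perfect set: determined by a partial function `ℕ ⇀ 2`
whose domain has infinite complement. -/
def SilverPerf (P : Set CS) : Prop :=
  ∃ f : ℕ → Option (ZMod 2), {n | f n = none}.Infinite ∧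
    P = {x | ∀ n b, f n = some b → x n = b}

/-- A Marczewski null (`s₀`) set. -/
def S0Set (X : Set CS) : Prop :=
  ∀ P, PerfSet P → ∃ Q, PerfSet Q ∧ Q ⊆ P ∧ Q ∩ X = ∅

/-- `S` is a Sierpiński set with respect to the measure `μ`: uncountable, with
countable intersection with every `μ`-null set. -/
def Sierpinski (μ : Measure CS) (S : Set CS) : Prop :=
  ¬ S.Countable ∧ ∀ N : Set CS, μ N = 0 → (S ∩ N).Countable

/-- The interleaving homeomorphism `h : 2^ω × 2^ω → 2^ω`,
`h(x,y) = ⟨x 0, y 0, x 1, y 1, …⟩`. -/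
def interleave (p : CS × CS) : CS := fun n => if n % 2 = 0 then p.1 (n / 2) else p.2 (n / 2)

/-- `X` is universally null: outer measure zero with respect to every finite diffused
Borel measure on `2^ω`. -/
def UniversallyNull (X : Set CS) : Prop :=
  ∀ μ : Measure CS, IsFiniteMeasure μ → (∀ x : CS, μ {x} = 0) → μ X = 0

/-- `X` is strongly null: for every sequence of positive `ε n` there are sets `A n` of
diameter `< ε n` (with respect to the standard metric `d(x,y) = 2^{-min{n : x n ≠ y n}}`,
expressed combinatorially) covering `X`. -/
def StronglyNull (X : Set CS) : Prop :=
  ∀ ε : ℕ → ℝ, (∀ n, 0 < ε n) → ∃ A : ℕ → Set CS,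
    (∀ n, ∃ N : ℕ, (2 : ℝ)⁻¹ ^ N < ε n ∧ ∀ x ∈ A n, ∀ y ∈ A n, ∀ i < N, x i = y i) ∧
    X ⊆ ⋃ n, A n

/-- `X` is perfectly null in the transitive sense: for every perfect `P` there is a
`G_δ` set `G ⊇ X` with `(G + t) ∩ P` being `P`-null for every `t`. -/
def PNPrime (X : Set CS) : Prop :=
  ∀ P, PerfSet P → ∃ G : Set CS, IsGδ G ∧ X ⊆ G ∧
    ∀ t : CS, PNull P ((fun g => g + t) '' G)

/-- Basic cylinder in the Baire space `ω^ω`. -/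
def cylN (w : List ℕ) : Set (ℕ → ℕ) := {x | ∀ i, i < w.length → x i = w.getD i 0}

/-- `μ` is the natural measure `m′` on the Baire space, determined by
`m′ [w] = ∏_{i<|w|} 2^{-(w i + 1)}`. -/
def IsGeomProd (μ : Measure (ℕ → ℕ)) : Prop :=
  IsProbabilityMeasure μ ∧ ∀ w : List ℕ,
    μ (cylN w) = ∏ i ∈ Finset.range w.length, (2 : ENNReal)⁻¹ ^ (w.getD i 0 + 1)

-- basic cyl lemmas
lemma mem_cyl {w : List (ZMod 2)} {x : CS} : x ∈ cyl w ↔ ∀ i, i < w.length → x i = w.getD i 0 :=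
  Iff.rfl

lemma mem_cyl_append {v : List (ZMod 2)} {b : ZMod 2} {x : CS} :
    x ∈ cyl (v ++ [b]) ↔ x ∈ cyl v ∧ x v.length = b := by
  constructor
  · intro h
    refine ⟨fun i hi => ?_, ?_⟩
    · have := h i (by simp; omega)
      rwa [List.getD_append _ _ _ _ hi] at this
    · have := h v.length (by simp)
      rw [List.getD_append_right _ _ _ _ (le_refl _)] at this
      simpa using this
  · rintro ⟨h1, h2⟩ i hi
    simp only [List.length_append, List.length_singleton] at hi
    rcases lt_or_eq_of_le (Nat.lt_succ_iff.mp hi) with hi' | hi'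
    · rw [List.getD_append _ _ _ _ hi']; exact h1 i hi'
    · subst hi'; rw [List.getD_append_right _ _ _ _ (le_refl _)]
      simpa using h2

lemma measurableSet_cyl (w : List (ZMod 2)) : MeasurableSet (cyl w) := by
  have : cyl w = ⋂ (i : ℕ) (_ : i < w.length), (fun x : CS => x i) ⁻¹' {w.getD i 0} := by
    ext x; simp [mem_cyl]
  rw [this]
  exact MeasurableSet.iInter fun i => MeasurableSet.iInter fun _ =>
    (measurable_pi_apply i) (measurableSet_singleton _)

lemma cyl_nil : cyl [] = univ := by ext x; simp [mem_cyl]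

lemma zmod2_cases (c : ZMod 2) : c = 0 ∨ c = 1 := by revert c; decide

lemma cyl_split (v : List (ZMod 2)) : cyl v = cyl (v ++ [0]) ∪ cyl (v ++ [1]) := by
  ext x
  simp only [mem_union, mem_cyl_append]
  constructor
  · intro h
    rcases zmod2_cases (x v.length) with h' | h'
    · exact Or.inl ⟨h, h'⟩
    · exact Or.inr ⟨h, h'⟩
  · rintro (⟨h, _⟩ | ⟨h, _⟩) <;> exact h

lemma cyl_disj (v : List (ZMod 2)) : cyl (v ++ [0]) ∩ cyl (v ++ [1]) = ∅ := by
  ext x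
  simp only [mem_inter_iff, mem_cyl_append, mem_empty_iff_false, iff_false]
  rintro ⟨⟨_, h0⟩, ⟨_, h1⟩⟩
  rw [h0] at h1; exact absurd h1 (by decide)

lemma cyl_append_subset (v : List (ZMod 2)) (b : ZMod 2) : cyl (v ++ [b]) ⊆ cyl v :=
  fun _ h => (mem_cyl_append.mp h).1

-- cylinder basis lemma
lemma cyl_basis {q : CS} {U : Set CS} (hU : IsOpen U) (hq : q ∈ U) :
    ∃ n, ∀ y : CS, (∀ i, i < n → y i = q i) → y ∈ U := by
  obtain ⟨I, u, hu, hsub⟩ := isOpen_pi_iff.mp hU q hq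
  refine ⟨(I.sup id) + 1, fun y hy => hsub fun i hi => ?_⟩
  have : y i = q i := hy i (Nat.lt_succ_of_le (Finset.le_sup (f := id) hi))
  rw [this]; exact (hu i hi).2

-- the step function and node sequence
open Classical in
noncomputable def stp (Q : Set CS) (w : List (ZMod 2)) (y : CS) : ZMod 2 :=
  if Branch Q w then y (brCount Q w)
  else if (cyl (w ++ [0]) ∩ Q).Nonempty then 0 else 1

noncomputable def nd (Q : Set CS) (y : CS) : ℕ → List (ZMod 2)
  | 0 => []
  | n + 1 => nd Q y n ++ [stp Q (nd Q y n) y]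

noncomputable def hQ (Q : Set CS) (y : CS) : CS := fun n => stp Q (nd Q y n) y

lemma nd_length (Q : Set CS) (y : CS) (n : ℕ) : (nd Q y n).length = n := by
  induction n with
  | zero => rfl
  | succ n ih => simp [nd, ih]

lemma nd_eq_ofFn (Q : Set CS) (y : CS) (n : ℕ) :
    nd Q y n = List.ofFn (fun i : Fin n => hQ Q y i) := by
  induction n with
  | zero => rfl
  | succ n ih =>
    show nd Q y n ++ [hQ Q y n] = _
    rw [List.ofFn_succ', List.concat_eq_append, ih]
    rfl

lemma hQ_mem_cyl_iff {Q : Set CS} {y : CS} {u : List (ZMod 2)} :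
    hQ Q y ∈ cyl u ↔ nd Q y u.length = u := by
  rw [nd_eq_ofFn]
  constructor
  · intro h
    apply List.ext_getElem (by simp)
    intro i h1 h2
    simp only [List.getElem_ofFn]
    have := h i (by simpa using h2)
    rwa [List.getD_eq_getElem _ _ h2] at this
  · intro h i hi
    rw [← h, List.getD_eq_getElem _ _ (by simpa using hi)]
    simp

lemma nd_succ_eq_append {Q : Set CS} {y : CS} {n : ℕ} {v : List (ZMod 2)} {b : ZMod 2}
    (hv : v.length = n) :
    nd Q y (n + 1) = v ++ [b] ↔ nd Q y n = v ∧ stp Q v y = b := by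
  constructor
  · intro h
    have hl : (nd Q y n).length = v.length := by rw [nd_length, hv]
    obtain ⟨h1, h2⟩ := List.append_inj (by exact h) hl
    refine ⟨h1, ?_⟩
    rw [← h1]
    exact (List.cons.injEq _ _ _ _).mp h2 |>.1
  · rintro ⟨h1, h2⟩
    show nd Q y n ++ [stp Q (nd Q y n) y] = v ++ [b]
    rw [h1, h2]

lemma stp_const {Q : Set CS} {u : List (ZMod 2)} (hb : ¬ Branch Q u) (y z : CS) :
    stp Q u y = stp Q u z := by simp [stp, hb]

-- measurability of nd-level sets
lemma measurableSet_nd_eq (Q : Set CS) (n : ℕ) (u : List (ZMod 2)) :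
    MeasurableSet {y : CS | nd Q y n = u} := by
  induction n generalizing u with
  | zero =>
    by_cases h : u = []
    · subst h
      convert MeasurableSet.univ using 1
      ext y; simp [nd]
    · convert MeasurableSet.empty using 1
      ext y; simp only [mem_setOf_eq, mem_empty_iff_false, iff_false]
      intro hy; exact h (by simpa [nd] using hy.symm)
  | succ n ih =>
    by_cases hlen : u.length = n + 1
    · have hu : u ≠ [] := by intro h; subst h; simp at hlen
      have hrep : u = u.dropLast ++ [u.getLast hu] := by
        simp [List.dropLast_append_getLast]
      have hdl : u.dropLast.length = n := by
        have := List.length_dropLast (xs := u); omega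
      have : {y : CS | nd Q y (n+1) = u} =
          {y : CS | nd Q y n = u.dropLast} ∩ {y : CS | stp Q u.dropLast y = u.getLast hu} := by
        ext y
        rw [Set.mem_setOf_eq]
        conv_lhs => rw [hrep]
        rw [nd_succ_eq_append hdl]
        rfl
      rw [this]
      refine (ih _).inter ?_
      -- stp-level set measurable
      by_cases hb : Branch Q u.dropLast
      · have : {y : CS | stp Q u.dropLast y = u.getLast hu} =
            (fun y : CS => y (brCount Q u.dropLast)) ⁻¹' {u.getLast hu} := by
          ext y; simp [stp, hb]
        rw [this]
        exact (measurable_pi_apply _) (measurableSet_singleton _)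
      · by_cases hc : stp Q u.dropLast (fun _ => 0) = u.getLast hu
        · convert MeasurableSet.univ using 1
          ext y
          simp only [mem_setOf_eq, mem_univ, iff_true]
          rw [stp_const hb y (fun _ => 0)]; exact hc
        · convert MeasurableSet.empty using 1
          ext y
          simp only [mem_setOf_eq, mem_empty_iff_false, iff_false]
          intro hy; exact hc (by rw [← stp_const hb y (fun _ => 0)]; exact hy)
    · convert MeasurableSet.empty using 1
      ext y; simp only [mem_setOf_eq, mem_empty_iff_false, iff_false]
      intro hy
      have := nd_length Q y (n+1)
      rw [hy] at this; exact hlen this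

lemma measurable_hQ (Q : Set CS) : Measurable (hQ Q) := by
  rw [measurable_pi_iff]
  intro n
  apply measurable_to_countable'
  intro b
  have : (fun y => hQ Q y n) ⁻¹' {b} =
      ⋃ (u : List (ZMod 2)), ({y : CS | nd Q y n = u} ∩ {y : CS | stp Q u y = b}) := by
    ext y
    simp only [mem_preimage, mem_singleton_iff, mem_iUnion, mem_inter_iff, mem_setOf_eq]
    constructor
    · intro h; exact ⟨nd Q y n, rfl, h⟩
    · rintro ⟨u, h1, h2⟩; rw [hQ, h1]; exact h2
  rw [this]
  refine MeasurableSet.iUnion fun u => (measurableSet_nd_eq Q n u).inter ?_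
  by_cases hb : Branch Q u
  · have : {y : CS | stp Q u y = b} = (fun y : CS => y (brCount Q u)) ⁻¹' {b} := by
      ext y; simp [stp, hb]
    rw [this]; exact (measurable_pi_apply _) (measurableSet_singleton _)
  · by_cases hc : stp Q u (fun _ => 0) = b
    · convert MeasurableSet.univ using 1
      ext y
      simp only [mem_setOf_eq, mem_univ, iff_true]
      rw [stp_const hb y (fun _ => 0)]; exact hc
    · convert MeasurableSet.empty using 1
      ext y
      simp only [mem_setOf_eq, mem_empty_iff_false, iff_false]
      intro hy; exact hc (by rw [← stp_const hb y (fun _ => 0)]; exact hy)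

lemma nd_cyl_nonempty {Q : Set CS} (hQne : Q.Nonempty) (y : CS) (n : ℕ) :
    (cyl (nd Q y n) ∩ Q).Nonempty := by
  induction n with
  | zero => simpa [nd, cyl_nil] using hQne
  | succ n ih =>
    show (cyl (nd Q y n ++ [stp Q (nd Q y n) y]) ∩ Q).Nonempty
    set w := nd Q y n with hw
    by_cases hb : Branch Q w
    · rcases zmod2_cases (stp Q w y) with h | h <;> rw [h]
      · exact hb.1
      · exact hb.2
    · by_cases hc : (cyl (w ++ [0]) ∩ Q).Nonempty
      · rw [show stp Q w y = 0 from by simp [stp, hb, hc]]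
        exact hc
      · rw [show stp Q w y = 1 from by simp [stp, hb, hc]]
        obtain ⟨q, hq1, hq2⟩ := ih
        refine ⟨q, ?_, hq2⟩
        rcases zmod2_cases (q w.length) with h | h
        · exact absurd ⟨q, mem_cyl_append.mpr ⟨hq1, h⟩, hq2⟩ hc
        · exact mem_cyl_append.mpr ⟨hq1, h⟩

lemma hQ_mem {Q : Set CS} (hQc : IsClosed Q) (hQne : Q.Nonempty) (y : CS) : hQ Q y ∈ Q := by
  have : hQ Q y ∈ closure Q := by
    rw [mem_closure_iff]
    intro U hU hmem
    obtain ⟨n, hn⟩ := cyl_basis hU hmem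
    obtain ⟨q, hq1, hq2⟩ := nd_cyl_nonempty hQne y n
    refine ⟨q, hn q fun i hi => ?_, hq2⟩
    have h1 := hq1 i (by rw [nd_length]; exact hi)
    have h2 : hQ Q y ∈ cyl (nd Q y n) := hQ_mem_cyl_iff.mpr (by rw [nd_length])
    have h3 := h2 i (by rw [nd_length]; exact hi)
    rw [h1, ← h3]
  rwa [hQc.closure_eq] at this

-- Lemma A: canonical measures are positive on cylinders meeting Q
lemma canonical_compl_zero {Q : Set CS} {ν : Measure CS} (hν : IsCanonical Q ν)
    (hQc : IsClosed Q) : ν Qᶜ = 0 := by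
  obtain ⟨hp, hq, _⟩ := hν
  have := measure_compl hQc.measurableSet (by exact (measure_lt_top ν Q).ne)
  rw [hq, measure_univ] at this
  simpa using this

lemma canonical_pos {Q : Set CS} {ν : Measure CS} (hν : IsCanonical Q ν)
    (hQc : IsClosed Q) : ∀ w : List (ZMod 2), (cyl w ∩ Q).Nonempty → ν (cyl w) ≠ 0 := by
  intro w
  induction w using List.reverseRecOn with
  | nil =>
    intro _
    rw [cyl_nil]
    have := hν.1
    simp [measure_univ]
  | append_singleton v b ih =>
    intro hne
    have hsplit : ν (cyl v) = ν (cyl (v ++ [0])) + ν (cyl (v ++ [1])) := by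
      rw [cyl_split v]
      rw [measure_union _ (measurableSet_cyl _)]
      rw [Set.disjoint_iff_inter_eq_empty]
      exact cyl_disj v
    have hvne : (cyl v ∩ Q).Nonempty := by
      obtain ⟨q, h1, h2⟩ := hne
      exact ⟨q, cyl_append_subset v b h1, h2⟩
    have hv := ih hvne
    by_cases hb : Branch Q v
    · have heq := hν.2.2 v hb
      intro h0
      apply hv
      rcases zmod2_cases b with rfl | rfl
      · rw [hsplit, h0, ← heq, h0]; simp
      · rw [hsplit, heq, h0]; simp
    · -- the other side has empty intersection with Q
      rcases zmod2_cases b with rfl | rfl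
      · have hother : cyl (v ++ [1]) ∩ Q = ∅ := by
          by_contra h
          exact hb ⟨hne, nonempty_iff_ne_empty.mpr h⟩
        have h1 : ν (cyl (v ++ [1])) = 0 := by
          refine measure_mono_null ?_ (canonical_compl_zero hν hQc)
          intro z hz hzQ
          have : z ∈ cyl (v ++ [1]) ∩ Q := ⟨hz, hzQ⟩
          rw [hother] at this
          exact this
        intro h0
        apply hv
        rw [hsplit, h0, h1]; simp
      · have hother : cyl (v ++ [0]) ∩ Q = ∅ := by
          by_contra h
          exact hb ⟨nonempty_iff_ne_empty.mpr h, hne⟩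
        have h0' : ν (cyl (v ++ [0])) = 0 := by
          refine measure_mono_null ?_ (canonical_compl_zero hν hQc)
          intro z hz hzQ
          have : z ∈ cyl (v ++ [0]) ∩ Q := ⟨hz, hzQ⟩
          rw [hother] at this
          exact this
        intro h0
        apply hv
        rw [hsplit, h0, h0']; simp

lemma prefixes_finite (w : List (ZMod 2)) (Q : Set CS) :
    {u : List (ZMod 2) | u <+: w ∧ u ≠ w ∧ Branch Q u}.Finite := by
  apply Set.Finite.subset (Set.finite_Iic w.length |>.image (fun n => w.take n))
  rintro u ⟨hpre, -, -⟩
  exact ⟨u.length, by simpa using hpre.length_le, (List.prefix_iff_eq_take.mp hpre).symm⟩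

lemma brCount_lt {Q : Set CS} {u w : List (ZMod 2)} (hpre : u <+: w) (hne : u ≠ w)
    (hb : Branch Q u) : brCount Q u < brCount Q w := by
  have hfin : {v : List (ZMod 2) | v <+: u ∧ v ≠ u ∧ Branch Q v}.Finite := prefixes_finite u Q
  have hfinw : {v : List (ZMod 2) | v <+: w ∧ v ≠ w ∧ Branch Q v}.Finite := prefixes_finite w Q
  have hsub : insert u {v : List (ZMod 2) | v <+: u ∧ v ≠ u ∧ Branch Q v} ⊆
      {v : List (ZMod 2) | v <+: w ∧ v ≠ w ∧ Branch Q v} := by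
    rintro v (rfl | ⟨h1, h2, h3⟩)
    · exact ⟨hpre, hne, hb⟩
    · refine ⟨h1.trans hpre, ?_, h3⟩
      rintro rfl
      apply h2
      have hl1 := h1.length_le
      have hl2 := hpre.length_le
      rw [List.prefix_iff_eq_take.mp h1, List.take_of_length_le (by omega)]
  have h1 : brCount Q u + 1 = (insert u {v : List (ZMod 2) | v <+: u ∧ v ≠ u ∧ Branch Q v}).ncard := by
    rw [Set.ncard_insert_of_notMem (fun h => h.2.1 rfl) hfin]
    rfl
  have h2 := Set.ncard_le_ncard hsub hfinw
  rw [← h1] at h2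
  exact Nat.lt_of_succ_le h2

-- the coordinate-flip translation
def flp (j : ℕ) : CS := fun i => if i = j then 1 else 0

lemma nd_flip {Q : Set CS} {w : List (ZMod 2)} {j : ℕ} (hj : j = brCount Q w) :
    ∀ m, m ≤ w.length → ∀ y : CS, nd Q y m = w.take m → nd Q (flp j + y) m = w.take m := by
  intro m
  induction m with
  | zero => intro _ y _; rfl
  | succ m ih =>
    intro hm y hy
    have hmw : m < w.length := hm
    have hy' : nd Q y m = w.take m ∧ stp Q (w.take m) y = w[m] := by
      have h5 := hy
      rw [List.take_succ, List.getElem?_eq_getElem hmw] at h5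
      simp only [Option.toList_some] at h5
      exact (nd_succ_eq_append (by simp [List.length_take]; omega)).mp h5
    have ihm := ih (le_of_lt hmw) y hy'.1
    have hstp : stp Q (w.take m) (flp j + y) = stp Q (w.take m) y := by
      by_cases hbm : Branch Q (w.take m)
      · have hlt : brCount Q (w.take m) < brCount Q w := by
          refine brCount_lt (List.take_prefix m w) ?_ hbm
          intro h
          have := congrArg List.length h
          simp [List.length_take] at this
          omega
        simp only [stp, if_pos hbm]
        have h0 : flp j (brCount Q (w.take m)) = 0 := by
          simp only [flp]
          rw [if_neg (by omega)]
        show (flp j + y) _ = y _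
        rw [Pi.add_apply, h0, zero_add]
      · exact stp_const hbm _ _
    show nd Q (flp j + y) m ++ [stp Q (nd Q (flp j + y) m) (flp j + y)] = w.take (m+1)
    rw [ihm, hstp, hy'.2, List.take_succ, List.getElem?_eq_getElem hmw]
    simp

lemma flp_add_flp (j : ℕ) : flp j + flp j = 0 := by
  funext i
  show flp j i + flp j i = 0
  simp only [flp]
  by_cases h : i = j <;> simp [h] <;> decide

noncomputable def K0 : TopologicalSpace.PositiveCompacts CS :=
  ⟨⟨Set.univ, isCompact_univ⟩, by rw [interior_univ]; exact ⟨0, trivial⟩⟩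

noncomputable def kappa : Measure CS := Measure.addHaarMeasure K0

instance kappa_prob : IsProbabilityMeasure kappa :=
  ⟨by rw [show (univ : Set CS) = (K0 : Set CS) from rfl, kappa, Measure.addHaarMeasure_self]⟩

instance kappa_inv : kappa.IsAddLeftInvariant :=
  MeasureTheory.Measure.isAddLeftInvariant_addHaarMeasure K0

noncomputable def canonMeas (Q : Set CS) : Measure CS := Measure.map (hQ Q) kappa

lemma isCanonical_canonMeas {Q : Set CS} (hQc : IsClosed Q) (hQne : Q.Nonempty) :
    IsCanonical Q (canonMeas Q) := by
  have hm := measurable_hQ Q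
  refine ⟨Measure.isProbabilityMeasure_map hm.aemeasurable, ?_, ?_⟩
  · rw [canonMeas, Measure.map_apply hm hQc.measurableSet]
    have : hQ Q ⁻¹' Q = univ := eq_univ_of_forall fun y => hQ_mem hQc hQne y
    rw [this]
    exact measure_univ
  · intro w hb
    set j := brCount Q w with hj
    have hpre : ∀ b : ZMod 2, hQ Q ⁻¹' cyl (w ++ [b]) =
        {y : CS | nd Q y w.length = w} ∩ {y : CS | y j = b} := by
      intro b
      ext y
      rw [mem_preimage, hQ_mem_cyl_iff]
      have hlen : (w ++ [b]).length = w.length + 1 := by simp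
      rw [hlen, nd_succ_eq_append rfl]
      simp only [mem_inter_iff, mem_setOf_eq, stp, if_pos hb, ← hj]
    set A := {y : CS | nd Q y w.length = w} with hA
    have hAflip : ∀ y : CS, y ∈ A ↔ flp j + y ∈ A := by
      have fwd : ∀ y : CS, y ∈ A → flp j + y ∈ A := by
        intro y hy
        have := nd_flip (Q := Q) (w := w) hj.symm w.length (le_refl _) y
          (by rwa [List.take_length])
        rwa [List.take_length] at this
      intro y
      refine ⟨fwd y, fun h => ?_⟩
      have := fwd _ h
      rwa [← add_assoc, flp_add_flp, zero_add] at this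
    have hkey : (fun y : CS => flp j + y) ⁻¹' (A ∩ {y : CS | y j = 1}) =
        A ∩ {y : CS | y j = 0} := by
      ext y
      simp only [mem_preimage, mem_inter_iff, mem_setOf_eq]
      constructor
      · rintro ⟨h1, h2⟩
        refine ⟨(hAflip y).mpr h1, ?_⟩
        have : flp j j + y j = 1 := h2
        simp only [flp, if_pos rfl] at this
        rcases zmod2_cases (y j) with h | h
        · exact h
        · rw [h] at this; exact absurd this (by decide)
      · rintro ⟨h1, h2⟩
        refine ⟨(hAflip y).mp h1, ?_⟩
        show flp j j + y j = 1
        simp [flp, h2]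
    have hinv := measure_preimage_add kappa (flp j) (A ∩ {y : CS | y j = 1})
    rw [hkey] at hinv
    rw [canonMeas, Measure.map_apply hm (measurableSet_cyl _),
      Measure.map_apply hm (measurableSet_cyl _), hpre 0, hpre 1, hinv]

-- Lemma B: positivity of relatively clopen pieces
lemma canonical_piece_pos {Q Ps C : Set CS} {ν : Measure CS} (hν : IsCanonical Q ν)
    (hQc : IsClosed Q) (hC : IsClosed C) (hcover : Q ⊆ Ps ∪ C) {q : CS}
    (hqQ : q ∈ Q) (hq1 : q ∈ Ps) (hq2 : q ∉ C) : ν (Ps ∩ Q) ≠ 0 := by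
  obtain ⟨n, hn⟩ := cyl_basis hC.isOpen_compl hq2
  set w : List (ZMod 2) := List.ofFn (fun i : Fin n => q i) with hw
  have hqw : q ∈ cyl w := by
    intro i hi
    rw [hw, List.getD_eq_getElem _ _ (by simpa [hw] using hi)]
    simp
  have hmemw : ∀ y : CS, y ∈ cyl w → ∀ i, i < n → y i = q i := by
    intro y hy i hi
    have := hy i (by simpa [hw] using hi)
    rw [this, hw, List.getD_eq_getElem _ _ (by simpa using hi)]
    simp
  have hsub : cyl w ∩ Q ⊆ Ps ∩ Q := by
    rintro y ⟨hy1, hy2⟩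
    have hyC : y ∉ C := hn y (hmemw y hy1)
    rcases hcover hy2 with h | h
    · exact ⟨h, hy2⟩
    · exact absurd h hyC
  have hne : (cyl w ∩ Q).Nonempty := ⟨q, hqw, hqQ⟩
  have hpos := canonical_pos hν hQc w hne
  intro h0
  refine hpos (le_antisymm ?_ (zero_le))
  have h1 : ν (cyl w ∩ Q) = 0 := measure_mono_null hsub h0
  have h2 : ν (cyl w ∩ Qᶜ) = 0 :=
    measure_mono_null (inter_subset_right) (canonical_compl_zero hν hQc)
  calc ν (cyl w) ≤ ν (cyl w ∩ Q) + ν (cyl w ∩ Qᶜ) := by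
        refine le_trans (measure_mono ?_) (measure_union_le _ _)
        intro z hz
        by_cases hzQ : z ∈ Q
        · exact Or.inl ⟨hz, hzQ⟩
        · exact Or.inr ⟨hz, hzQ⟩
  _ ≤ 0 := by rw [h1, h2, add_zero]

-- Baire space side

lemma geom_tsum : ∑' n : ℕ, ((2 : ENNReal)⁻¹) ^ (n + 1) = 1 := by
  have h : ∀ n : ℕ, ((2 : ENNReal)⁻¹) ^ (n + 1) = (2:ENNReal)⁻¹ * ((2:ENNReal)⁻¹) ^ n := by
    intro n; rw [pow_succ, mul_comm]
  rw [tsum_congr h, ENNReal.tsum_mul_left, ENNReal.tsum_geometric, ENNReal.one_sub_inv_two]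
  rw [inv_inv]
  exact ENNReal.inv_mul_cancel (by norm_num) (by norm_num)

lemma tsum_pi_geom : ∀ i : ℕ, ∑' w : Fin i → ℕ, ∏ t : Fin i, ((2 : ENNReal)⁻¹) ^ (w t + 1) = 1 := by
  intro i
  induction i with
  | zero =>
    rw [tsum_eq_single (fun t => 0) (fun b hb => absurd (Subsingleton.elim b _) hb)]
    simp
  | succ i ih =>
    rw [← Equiv.tsum_eq (Fin.consEquiv (fun _ : Fin (i+1) => ℕ))]
    have : ∀ p : ℕ × (Fin i → ℕ),
        (∏ t : Fin (i+1), ((2 : ENNReal)⁻¹) ^ ((Fin.consEquiv (fun _ : Fin (i+1) => ℕ) p) t + 1)) =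
        ((2 : ENNReal)⁻¹) ^ (p.1 + 1) * ∏ t : Fin i, ((2 : ENNReal)⁻¹) ^ (p.2 t + 1) := by
      rintro ⟨a, g⟩
      rw [Fin.prod_univ_succ]
      congr 1
    rw [tsum_congr this, ENNReal.tsum_prod']
    simp_rw [ENNReal.tsum_mul_left, ih, mul_one]
    exact geom_tsum

lemma geom_tail (m : ℕ) : ∑' k : ℕ, ((2:ENNReal)⁻¹) ^ (m + k + 1) = ((2:ENNReal)⁻¹) ^ m := by
  have h : ∀ k : ℕ, ((2:ENNReal)⁻¹) ^ (m + k + 1) = ((2:ENNReal)⁻¹) ^ m * ((2:ENNReal)⁻¹) ^ (k+1) := by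
    intro k; rw [show m + k + 1 = m + (k+1) from by omega, pow_add]
  rw [tsum_congr h, ENNReal.tsum_mul_left, geom_tsum, mul_one]

lemma mu_coord_bound {μ : Measure (ℕ → ℕ)} (hμ : IsGeomProd μ) (i m : ℕ) :
    μ {x : ℕ → ℕ | m ≤ x i} ≤ ((2:ENNReal)⁻¹) ^ m := by
  have hcov : {x : ℕ → ℕ | m ≤ x i} ⊆
      ⋃ p : (Fin i → ℕ) × ℕ, cylN (List.ofFn p.1 ++ [m + p.2]) := by
    intro x hx
    refine mem_iUnion.mpr ⟨(fun t => x t, x i - m), fun t ht => ?_⟩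
    simp only [List.length_append, List.length_ofFn, List.length_singleton] at ht
    rcases lt_or_eq_of_le (Nat.lt_succ_iff.mp ht) with ht' | ht'
    · rw [List.getD_append _ _ _ _ (by simpa using ht'),
        List.getD_eq_getElem _ _ (by simpa using ht'), List.getElem_ofFn]
    · rw [ht', List.getD_append_right _ _ _ _ (by simp)]
      simp only [List.length_ofFn, Nat.sub_self, List.getD_cons_zero]
      have hm : m ≤ x i := hx
      omega
  calc μ {x : ℕ → ℕ | m ≤ x i}
      ≤ ∑' p : (Fin i → ℕ) × ℕ, μ (cylN (List.ofFn p.1 ++ [m + p.2])) :=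
        le_trans (measure_mono hcov) (measure_iUnion_le _)
    _ = ∑' p : (Fin i → ℕ) × ℕ,
        (∏ t : Fin i, ((2:ENNReal)⁻¹) ^ (p.1 t + 1)) * ((2:ENNReal)⁻¹) ^ (m + p.2 + 1) := by
        apply tsum_congr
        rintro ⟨w, k⟩
        rw [hμ.2]
        have hlen : (List.ofFn w ++ [m + k]).length = i + 1 := by simp
        rw [hlen, Finset.prod_range_succ]
        congr 1
        · rw [← Fin.prod_univ_eq_prod_range
            (fun t => ((2:ENNReal)⁻¹) ^ ((List.ofFn w ++ [m + k]).getD t 0 + 1)) i]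
          apply Finset.prod_congr rfl
          intro t _
          congr 2
          rw [List.getD_append _ _ _ _ (by simp), List.getD_eq_getElem _ _ (by simp)]
          simp
        · congr 2
          rw [List.getD_append_right _ _ _ _ (by simp)]
          simp
    _ = ((2:ENNReal)⁻¹) ^ m := by
        rw [ENNReal.tsum_prod']
        simp only
        have : ∀ w : Fin i → ℕ,
            (∑' k : ℕ, (∏ t : Fin i, ((2:ENNReal)⁻¹) ^ (w t + 1)) * ((2:ENNReal)⁻¹) ^ (m + k + 1))
            = (∏ t : Fin i, ((2:ENNReal)⁻¹) ^ (w t + 1)) * ((2:ENNReal)⁻¹) ^ m := by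
          intro w
          rw [ENNReal.tsum_mul_left, geom_tail]
        rw [tsum_congr this, ENNReal.tsum_mul_right, tsum_pi_geom, one_mul]


-- scheme lemmas
def pfx (x : ℕ → ℕ) (n : ℕ) : List ℕ := List.ofFn fun i : Fin n => x i

lemma pfx_length (x : ℕ → ℕ) (n : ℕ) : (pfx x n).length = n := by simp [pfx]

lemma pfx_getD {x : ℕ → ℕ} {n i : ℕ} (hi : i < n) : (pfx x n).getD i 0 = x i := by
  rw [pfx, List.getD_eq_getElem _ _ (by simpa using hi)]
  simp

lemma pfx_eq_of_agree {x y : ℕ → ℕ} {n : ℕ} (h : ∀ i, i < n → x i = y i) :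
    pfx x n = pfx y n := by
  apply List.ext_getElem (by simp [pfx])
  intro i h1 h2
  simp only [pfx, List.getElem_ofFn]
  exact h i (by simpa [pfx] using h1)

lemma levelDisj (P : List ℕ → Set CS)
    (hsub : ∀ (s : List ℕ) (n : ℕ), P (s ++ [n]) ⊆ P s)
    (hdisj : ∀ (s : List ℕ) (n m : ℕ), n ≠ m → P (s ++ [n]) ∩ P (s ++ [m]) = ∅) :
    ∀ n (s t : List ℕ), s.length = n → t.length = n → s ≠ t → P s ∩ P t = ∅ := by
  intro n
  induction n with
  | zero =>
    intro s t hs ht hne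
    exact absurd (by rw [List.length_eq_zero_iff.mp hs, List.length_eq_zero_iff.mp ht]) hne
  | succ n ih =>
    intro s t hs ht hne
    have hsne : s ≠ [] := by intro h; subst h; simp at hs
    have htne : t ≠ [] := by intro h; subst h; simp at ht
    by_cases hd : s.dropLast = t.dropLast
    · have hlast : s.getLast hsne ≠ t.getLast htne := by
        intro h
        apply hne
        conv_lhs => rw [← List.dropLast_append_getLast hsne]
        conv_rhs => rw [← List.dropLast_append_getLast htne]
        rw [hd, h]
      have := hdisj s.dropLast (s.getLast hsne) (t.getLast htne) hlast
      rw [List.dropLast_append_getLast hsne] at this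
      conv at this => rw [hd]
      rw [List.dropLast_append_getLast htne] at this
      exact this
    · have h1 : P s ⊆ P s.dropLast := by
        intro z hz
        rw [show s = s.dropLast ++ [s.getLast hsne] from
          (List.dropLast_append_getLast hsne).symm] at hz
        exact hsub _ _ hz
      have h2 : P t ⊆ P t.dropLast := by
        intro z hz
        rw [show t = t.dropLast ++ [t.getLast htne] from
          (List.dropLast_append_getLast htne).symm] at hz
        exact hsub _ _ hz
      have hih := ih s.dropLast t.dropLast
        (by rw [List.length_dropLast, hs]; omega) (by rw [List.length_dropLast, ht]; omega) hd
      ext z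
      simp only [mem_inter_iff, mem_empty_iff_false, iff_false]
      rintro ⟨hz1, hz2⟩
      have : z ∈ P s.dropLast ∩ P t.dropLast := ⟨h1 hz1, h2 hz2⟩
      rw [hih] at this
      exact this

lemma cylN_open (s : List ℕ) : IsOpen (cylN s) := by
  have : cylN s = ⋂ i : Fin s.length, (fun x : ℕ → ℕ => x i) ⁻¹' {s.getD i 0} := by
    ext x
    simp only [cylN, mem_setOf_eq, mem_iInter, mem_preimage, mem_singleton_iff]
    exact ⟨fun h i => h i i.2, fun h i hi => h ⟨i, hi⟩⟩
  rw [this]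
  exact isOpen_iInter_of_finite fun i =>
    (continuous_apply (i : ℕ)).isOpen_preimage _ (isOpen_discrete _)

/-- For any Lusin-type function `S : ω^ω → 2^ω` arising from a scheme
`⟨P_s : s ∈ ω^{<ω}⟩` of perfect sets (nested, disjoint at each node, with
`diam P_s ≤ 2^{-|s|}`, and `S x` the unique point of `⋂_n P_{x↾n}`), there is a perfect
set `Q` with `m′(S⁻¹[⋃ {P_s : μ_Q(P_s) = 0}]) < 1`. -/
theorem stmt_5 (S : (ℕ → ℕ) → CS) (P : List ℕ → Set CS)
    (hperf : ∀ s, PerfSet (P s))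
    (hsub : ∀ (s : List ℕ) (n : ℕ), P (s ++ [n]) ⊆ P s)
    (hdisj : ∀ (s : List ℕ) (n m : ℕ), n ≠ m → P (s ++ [n]) ∩ P (s ++ [m]) = ∅)
    (hdiam : ∀ s : List ℕ, ∀ x ∈ P s, ∀ y ∈ P s, ∀ i < s.length, x i = y i)
    (hS : ∀ x : ℕ → ℕ, ⋂ n : ℕ, P (List.ofFn fun i : Fin n => x i) = {S x}) :
    ∃ Q : Set CS, PerfSet Q ∧ ∀ μ : Measure (ℕ → ℕ), IsGeomProd μ →
      μ (S ⁻¹' (⋃ s ∈ {s : List ℕ | PNull Q (P s)}, P s)) < 1 := by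
  classical
  -- membership of S x in the scheme
  have hSmem : ∀ (x : ℕ → ℕ) (n : ℕ), S x ∈ P (pfx x n) := by
    intro x n
    have h1 : S x ∈ ⋂ n : ℕ, P (List.ofFn fun i : Fin n => x i) := by
      rw [hS x]; exact rfl
    exact mem_iInter.mp h1 n
  -- continuity of S
  have hScont : Continuous S := by
    apply continuous_pi
    intro k
    rw [continuous_iff_continuousAt]
    intro x
    rw [ContinuousAt, Filter.tendsto_def]
    intro U hU
    have hV : {y : ℕ → ℕ | ∀ i, i < k + 1 → y i = x i} ∈ nhds x := by
      have heq : {y : ℕ → ℕ | ∀ i, i < k + 1 → y i = x i} =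
          ⋂ i : Fin (k + 1), (fun y : ℕ → ℕ => y i) ⁻¹' {x i} := by
        ext y
        simp only [mem_setOf_eq, mem_iInter, mem_preimage, mem_singleton_iff]
        exact ⟨fun h i => h i i.2, fun h i hi => h ⟨i, hi⟩⟩
      rw [heq]
      exact Filter.iInter_mem.mpr fun i =>
        ((continuous_apply (i : ℕ)).isOpen_preimage _ (isOpen_discrete _)).mem_nhds rfl
    refine Filter.mem_of_superset hV ?_
    intro y hy
    have hpfx : pfx y (k + 1) = pfx x (k + 1) := pfx_eq_of_agree hy
    have h1 : S y ∈ P (pfx x (k + 1)) := by rw [← hpfx]; exact hSmem y (k + 1)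
    have h2 : S y k = S x k :=
      hdiam (pfx x (k + 1)) _ h1 _ (hSmem x (k + 1)) k (by rw [pfx_length]; omega)
    show S y k ∈ U
    rw [h2]
    exact mem_of_mem_nhds hU
  -- the compact branching set B
  set B : Set (ℕ → ℕ) := {x | ∀ i, x i ≤ i + 1} with hB
  have hBcompact : IsCompact B := by
    have heq : B = Set.pi univ fun i : ℕ => Set.Iic (i + 1) := by
      ext x; simp only [hB, mem_setOf_eq, Set.mem_univ_pi, Set.mem_Iic]
    rw [heq]
    exact isCompact_univ_pi fun i => (Set.finite_Iic (i + 1)).isCompact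
  set Q : Set CS := S '' B with hQ'
  have hQclosed : IsClosed Q := (hBcompact.image hScont).isClosed
  have hQne : Q.Nonempty := ⟨S (fun _ => 0), ⟨fun _ => 0, fun i => Nat.zero_le _, rfl⟩⟩
  -- key: points of B give s = pfx identification
  have hident : ∀ (x : ℕ → ℕ) (s : List ℕ), S x ∈ P s → s = pfx x s.length := by
    intro x s hmem
    by_contra hne
    have hds := levelDisj P hsub hdisj s.length s (pfx x s.length) rfl (pfx_length x _) hne
    have : S x ∈ P s ∩ P (pfx x s.length) := ⟨hmem, hSmem x _⟩
    rw [hds] at this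
    exact this
  -- perfectness of Q
  have hQperf : PerfSet Q := by
    refine ⟨⟨hQclosed, ?_⟩, hQne⟩
    rintro q ⟨x, hxB, rfl⟩
    rw [accPt_iff_nhds]
    intro U hU
    obtain ⟨V, hVU, hVopen, hxV⟩ := mem_nhds_iff.mp hU
    obtain ⟨n, hn⟩ := cyl_basis hVopen hxV
    set y : ℕ → ℕ := Function.update x n (if x n = 0 then 1 else 0) with hy
    have hyB : y ∈ B := by
      intro i
      by_cases hin : i = n
      · subst hin
        rw [hy, Function.update_self]
        split <;> omega
      · rw [hy, Function.update_of_ne hin]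
        exact hxB i
    have hyn : y n ≠ x n := by
      rw [hy, Function.update_self]
      split <;> omega
    have hagree : ∀ i, i < n → y i = x i := by
      intro i hi
      rw [hy, Function.update_of_ne (by omega)]
    have hpfx : pfx y n = pfx x n := pfx_eq_of_agree hagree
    have hSy : ∀ i, i < n → S y i = S x i := by
      intro i hi
      have h1 : S y ∈ P (pfx x n) := by rw [← hpfx]; exact hSmem y n
      exact hdiam (pfx x n) _ h1 _ (hSmem x n) i (by rw [pfx_length]; exact hi)
    have hSyU : S y ∈ U := hVU (hn (S y) hSy)
    have hSyne : S y ≠ S x := by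
      intro h
      have hpne : pfx y (n + 1) ≠ pfx x (n + 1) := by
        intro hpe
        have h1 : (pfx y (n + 1)).getD n 0 = (pfx x (n + 1)).getD n 0 := by rw [hpe]
        rw [pfx_getD (Nat.lt_succ_self n), pfx_getD (Nat.lt_succ_self n)] at h1
        exact hyn h1
      have hds := levelDisj P hsub hdisj (n + 1) (pfx y (n + 1)) (pfx x (n + 1))
        (pfx_length y _) (pfx_length x _) hpne
      have : S x ∈ P (pfx y (n + 1)) ∩ P (pfx x (n + 1)) :=
        ⟨h ▸ hSmem y (n + 1), hSmem x (n + 1)⟩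
      rw [hds] at this
      exact this
    exact ⟨S y, ⟨hSyU, ⟨y, hyB, rfl⟩⟩, hSyne⟩
  refine ⟨Q, hQperf, ?_⟩
  intro μ hμ
  have hν := isCanonical_canonMeas hQclosed hQne
  -- the preimage is covered by the bad coordinate sets
  have hsubU : S ⁻¹' (⋃ s ∈ {s : List ℕ | PNull Q (P s)}, P s) ⊆
      ⋃ i : ℕ, {x : ℕ → ℕ | i + 2 ≤ x i} := by
    intro x hx
    by_contra hxn
    simp only [mem_iUnion, mem_setOf_eq, not_exists, not_le] at hxn
    have hxB : x ∈ B := fun i => by have := hxn i; omega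
    simp only [mem_preimage, mem_iUnion, mem_setOf_eq] at hx
    obtain ⟨s, hsnull, hmem⟩ := hx
    set k := s.length with hk
    have hseq : s = pfx x k := hident x s hmem
    have hzero : canonMeas Q (P s ∩ Q) = 0 := hsnull (canonMeas Q) hν
    -- contradiction via positivity
    set C : Set CS := S '' (B \ cylN s) with hC
    have hCclosed : IsClosed C := by
      have : IsCompact (B \ cylN s) := hBcompact.inter_right (cylN_open s).isClosed_compl
      exact (this.image hScont).isClosed
    have hcover : Q ⊆ P s ∪ C := by
      rintro _ ⟨z, hzB, rfl⟩
      by_cases hz : z ∈ cylN s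
      · left
        have : pfx z k = s := by
          apply List.ext_getElem (by rw [pfx_length])
          intro i h1 h2
          have hzi : z i = s.getD i 0 := hz i h2
          have hpz : (pfx z k)[i] = z i := by simp [pfx]
          rw [hpz, hzi, List.getD_eq_getElem s 0 h2]
        rw [← this]
        exact hSmem z k
      · exact Or.inr ⟨z, ⟨hzB, hz⟩, rfl⟩
    have hq2 : S x ∉ C := by
      rintro ⟨z, ⟨hzB, hzn⟩, hzx⟩
      have hzpne : pfx z k ≠ s := by
        intro h
        apply hzn
        intro i hi
        rw [← h, pfx_getD (by omega)]
      have hds := levelDisj P hsub hdisj k (pfx z k) s (pfx_length z _) rfl hzpne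
      have : S x ∈ P (pfx z k) ∩ P s := ⟨hzx ▸ hSmem z k, hmem⟩
      rw [hds] at this
      exact this
    exact canonical_piece_pos hν hQclosed hCclosed hcover ⟨x, hxB, rfl⟩ hmem hq2 hzero
  -- measure computation
  calc μ (S ⁻¹' (⋃ s ∈ {s : List ℕ | PNull Q (P s)}, P s))
      ≤ μ (⋃ i : ℕ, {x : ℕ → ℕ | i + 2 ≤ x i}) := measure_mono hsubU
    _ ≤ ∑' i : ℕ, μ {x : ℕ → ℕ | i + 2 ≤ x i} := measure_iUnion_le _
    _ ≤ ∑' i : ℕ, ((2 : ENNReal)⁻¹) ^ (i + 2) :=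
        ENNReal.tsum_le_tsum fun i => mu_coord_bound hμ i (i + 2)
    _ = ((2 : ENNReal)⁻¹) ^ 1 := by
        rw [tsum_congr (fun i => by rw [show i + 2 = 1 + i + 1 from by omega]), geom_tail 1]
    _ < 1 := by
        rw [pow_one]
        exact ENNReal.inv_lt_one.mpr ENNReal.one_lt_two
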